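/- Let z, Cz ∈ ℝ^L with C an orthogonal matrix satisfying ‖Cz − z‖ ≤ θ‖z‖, and suppose t ∈ ℝ^L satisfies: σ_ℓ(t) is the closest shift of t to z while t itself is the closest shift of t to Cz. Then 0 ≤ ⟨z, σ_ℓ(t) − t⟩ ≤ 2θ‖z‖·‖t‖. -/

import Mathlib

open Matrix
open scoped RealInnerProductSpace

/-- Circular shift of a signal in `ℝ^L`. -/
def shift (L : ℕ) [NeZero L] (i : Fin L) (z : EuclideanSpace ℝ (Fin L)) :
    EuclideanSpace ℝ (Fin L) := WithLp.toLp 2 (fun n => z (n - i))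

/-- The action of a matrix on a signal in `ℝ^L`. -/
def act (L : ℕ) (C : Matrix (Fin L) (Fin L) ℝ) (z : EuclideanSpace ℝ (Fin L)) :
    EuclideanSpace ℝ (Fin L) := WithLp.toLp 2 (C.mulVec z)

lemma shift_norm (L : ℕ) [NeZero L] (k : Fin L) (t : EuclideanSpace ℝ (Fin L)) :
    ‖shift L k t‖ = ‖t‖ := by
  rw [EuclideanSpace.norm_eq, EuclideanSpace.norm_eq]
  congr 1
  exact Fintype.sum_equiv (Equiv.subRight k) _ _ (fun n => by simp [shift])

lemma shift_zero (L : ℕ) [NeZero L] (t : EuclideanSpace ℝ (Fin L)) :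
    shift L 0 t = t := by
  ext n; simp [shift]

/-- If `σ_ℓ(t)` is the shift of `t` closest to `z` while `t` itself is the shift of `t`
closest to `Cz`, where `C` is orthogonal with `‖Cz − z‖ ≤ θ‖z‖`, then
`0 ≤ ⟨z, σ_ℓ(t) − t⟩ ≤ 2θ‖z‖‖t‖`. -/
theorem inner_bound_near_discriminant (L : ℕ) [NeZero L]
    (C : Matrix (Fin L) (Fin L) ℝ) (horth : C * Cᵀ = 1)
    (θ : ℝ) (z t : EuclideanSpace ℝ (Fin L))
    (hclose : ‖act L C z - z‖ ≤ θ * ‖z‖)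
    (ℓ : Fin L)
    (hz : ∀ k : Fin L, ‖z - shift L ℓ t‖ ≤ ‖z - shift L k t‖)
    (hCz : ∀ k : Fin L, ‖act L C z - t‖ ≤ ‖act L C z - shift L k t‖) :
    0 ≤ ⟪z, shift L ℓ t - t⟫ ∧ ⟪z, shift L ℓ t - t⟫ ≤ 2 * θ * ‖z‖ * ‖t‖ := by
  set w : EuclideanSpace ℝ (Fin L) := act L C z
  set s : EuclideanSpace ℝ (Fin L) := shift L ℓ t
  have hns : ‖s‖ = ‖t‖ := shift_norm L ℓ t
  -- lower bound
  have h1 : ‖z - s‖ ≤ ‖z - t‖ := by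
    have := hz 0; rwa [shift_zero] at this
  have h1sq : ‖z - s‖ ^ 2 ≤ ‖z - t‖ ^ 2 := by
    apply pow_le_pow_left₀ (norm_nonneg _) h1
  rw [norm_sub_sq_real, norm_sub_sq_real, hns] at h1sq
  have hlow : 0 ≤ ⟪z, s - t⟫ := by
    rw [inner_sub_right]; linarith
  refine ⟨hlow, ?_⟩
  -- upper bound
  have h2 : ‖w - t‖ ≤ ‖w - s‖ := hCz ℓ
  have h2sq : ‖w - t‖ ^ 2 ≤ ‖w - s‖ ^ 2 :=
    pow_le_pow_left₀ (norm_nonneg _) h2 2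
  rw [norm_sub_sq_real, norm_sub_sq_real, hns] at h2sq
  have hw : ⟪w, s - t⟫ ≤ 0 := by
    rw [inner_sub_right]; linarith
  have hsplit : ⟪z, s - t⟫ = ⟪w, s - t⟫ + ⟪z - w, s - t⟫ := by
    rw [inner_sub_left]; ring
  have hcs : ⟪z - w, s - t⟫ ≤ ‖z - w‖ * ‖s - t‖ := real_inner_le_norm _ _
  have hzw : ‖z - w‖ ≤ θ * ‖z‖ := by rwa [norm_sub_rev] at hclose
  have hst : ‖s - t‖ ≤ 2 * ‖t‖ := by
    calc ‖s - t‖ ≤ ‖s‖ + ‖t‖ := norm_sub_le _ _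
    _ = 2 * ‖t‖ := by rw [hns]; ring
  have : ‖z - w‖ * ‖s - t‖ ≤ (θ * ‖z‖) * (2 * ‖t‖) := by
    apply mul_le_mul hzw hst (norm_nonneg _)
    exact le_trans (norm_nonneg _) hzw
  calc ⟪z, s - t⟫ ≤ ⟪z - w, s - t⟫ := by rw [hsplit]; linarith
  _ ≤ ‖z - w‖ * ‖s - t‖ := hcs
  _ ≤ (θ * ‖z‖) * (2 * ‖t‖) := this
  _ = 2 * θ * ‖z‖ * ‖t‖ := by ring
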